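/- arXiv:2004.06211 — 3 statements merged into one kernel-verified Lean document; each statement's English description precedes it below -/
import Mathlib

section
/- Let n ≥ 2 and U_h = P_h[χ_{S_+^{n-1}} − χ_{S_-^{n-1}}], the invariant Poisson integral of the difference of indicator functions of the upper and lower hemispheres. Then for 0 ≤ r < 1, inf over a ≥ 0 of ∫_{S^{n-1}} |P_h(r e_n, η) − a| dσ(η) equals U_h(r e_n), and the infimum is attained at a* = ((1-r^2)/(1+r^2))^{n-1}. -/
open MeasureTheory Metric Real Set

noncomputable section

/-- Poisson–Szegő kernel `P_h(x,ζ) = ((1-|x|²)/|x-ζ|²)^(n-1)`. -/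
def Ph (n : ℕ) (x ζ : EuclideanSpace ℝ (Fin n)) : ℝ :=
  ((1 - ‖x‖ ^ 2) / ‖x - ζ‖ ^ 2) ^ (n - 1)

/-- The vector `e_n = (0,…,0,1)`. -/
def eLast (n : ℕ) : EuclideanSpace ℝ (Fin n) :=
  if h : 0 < n then EuclideanSpace.single (⟨n - 1, by omega⟩ : Fin n) (1 : ℝ) else 0

/-- The unit sphere `S^{n-1}` in `ℝⁿ`. -/
abbrev Sph (n : ℕ) := Metric.sphere (0 : EuclideanSpace ℝ (Fin n)) 1

/-- Normalized surface measure `σ` on the unit sphere, `σ(S^{n-1}) = 1`. -/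
def sphereMeasure (n : ℕ) : Measure (Sph n) :=
  ((volume : Measure (EuclideanSpace ℝ (Fin n))).toSphere Set.univ)⁻¹ •
    (volume : Measure (EuclideanSpace ℝ (Fin n))).toSphere

/-- Last coordinate `η_n` of a vector in `ℝⁿ`. -/
def lastCoord (n : ℕ) (η : EuclideanSpace ℝ (Fin n)) : ℝ :=
  if h : 0 < n then η (⟨n - 1, by omega⟩ : Fin n) else 0

/-- `χ_{S₊^{n-1}} - χ_{S₋^{n-1}}`, difference of the indicators of the closed
upper and lower hemispheres. -/
def hemiDiff (n : ℕ) (η : EuclideanSpace ℝ (Fin n)) : ℝ :=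
  (if 0 ≤ lastCoord n η then (1 : ℝ) else 0) - (if lastCoord n η ≤ 0 then (1 : ℝ) else 0)

/-- `U_h = P_h[χ_{S₊^{n-1}} - χ_{S₋^{n-1}}]`, the invariant Poisson integral of the
difference of hemisphere indicators. -/
def Uh (n : ℕ) (x : EuclideanSpace ℝ (Fin n)) : ℝ :=
  ∫ η : Sph n, Ph n x η.1 * hemiDiff n η.1 ∂ sphereMeasure n

open scoped Pointwise

namespace Stmt12Aux

/-- Reflection negating the `j`-th coordinate. -/
def reflAt {n : ℕ} (j : Fin n) :
    EuclideanSpace ℝ (Fin n) ≃ₗᵢ[ℝ] EuclideanSpace ℝ (Fin n) :=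
  LinearIsometryEquiv.piLpCongrRight 2
    (fun i => if i = j then LinearIsometryEquiv.neg ℝ else LinearIsometryEquiv.refl ℝ ℝ)

lemma reflAt_apply {n : ℕ} (j : Fin n) (x : EuclideanSpace ℝ (Fin n)) (i : Fin n) :
    reflAt j x i = if i = j then -x i else x i := by
  simp only [reflAt, LinearIsometryEquiv.piLpCongrRight_apply]
  by_cases h : i = j
  · subst h; simp
  · simp [h]

lemma reflAt_involutive {n : ℕ} (j : Fin n) (x : EuclideanSpace ℝ (Fin n)) :
    reflAt j (reflAt j x) = x := by
  ext i
  simp only [reflAt_apply]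
  by_cases h : i = j <;> simp [h]

lemma reflAt_mem_sphere {n : ℕ} (j : Fin n) (η : Sph n) :
    reflAt j η.1 ∈ Metric.sphere (0 : EuclideanSpace ℝ (Fin n)) 1 := by
  have h := η.2
  simp only [mem_sphere_iff_norm, sub_zero] at h ⊢
  rw [(reflAt j).norm_map]; exact h

/-- The induced measurable equivalence of the unit sphere. -/
def reflSph {n : ℕ} (j : Fin n) : Sph n ≃ᵐ Sph n where
  toFun η := ⟨reflAt j η.1, reflAt_mem_sphere j η⟩
  invFun η := ⟨reflAt j η.1, reflAt_mem_sphere j η⟩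
  left_inv η := Subtype.ext (reflAt_involutive j η.1)
  right_inv η := Subtype.ext (reflAt_involutive j η.1)
  measurable_toFun :=
    Measurable.subtype_mk ((reflAt j).continuous.measurable.comp measurable_subtype_coe)
  measurable_invFun :=
    Measurable.subtype_mk ((reflAt j).continuous.measurable.comp measurable_subtype_coe)

lemma image_coe_preimage_reflSph {n : ℕ} (j : Fin n) (s : Set (Sph n)) :
    (Subtype.val '' ((reflSph j) ⁻¹' s)) = (reflAt j) ⁻¹' (Subtype.val '' s) := by
  ext x
  constructor
  · rintro ⟨η, hη, rfl⟩
    exact ⟨reflSph j η, hη, rfl⟩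
  · rintro hx
    obtain ⟨ξ, hξ, hξx⟩ := hx
    have hxs : ‖x‖ = 1 := by
      have h1 : ‖(ξ : EuclideanSpace ℝ (Fin n))‖ = 1 := by
        have := ξ.2; simpa [mem_sphere_iff_norm] using this
      rw [hξx, (reflAt j).norm_map] at h1
      exact h1
    have hxmem : x ∈ Metric.sphere (0 : EuclideanSpace ℝ (Fin n)) 1 := by
      simpa [mem_sphere_iff_norm] using hxs
    refine ⟨⟨x, hxmem⟩, ?_, rfl⟩
    have heq : reflSph j ⟨x, hxmem⟩ = ξ := Subtype.ext hξx.symm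
    show reflSph j ⟨x, hxmem⟩ ∈ s
    rw [heq]; exact hξ

lemma smul_preimage_reflAt {n : ℕ} (j : Fin n) (A : Set (EuclideanSpace ℝ (Fin n))) :
    (Ioo (0:ℝ) 1) • ((reflAt j) ⁻¹' A) = (reflAt j) ⁻¹' ((Ioo (0:ℝ) 1) • A) := by
  ext x
  simp only [Set.mem_smul_set, Set.mem_preimage]
  constructor
  · rintro ⟨c, hc, b, hb, rfl⟩
    exact ⟨c, hc, reflAt j b, hb, (_root_.map_smul _ _ _).symm⟩
  · rintro ⟨c, hc, a, ha, hax⟩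
    have hax' : c • a = reflAt j x := hax
    refine ⟨c, hc, (reflAt j).symm a, by simpa using ha, ?_⟩
    have hx : (reflAt j).symm (c • a) = x := by
      rw [hax']; exact (reflAt j).symm_apply_apply x
    rw [_root_.map_smul] at hx
    exact hx

lemma map_toSphere {n : ℕ} (j : Fin n) :
    Measure.map (reflSph j) (volume : Measure (EuclideanSpace ℝ (Fin n))).toSphere
      = (volume : Measure (EuclideanSpace ℝ (Fin n))).toSphere := by
  ext s hs
  rw [MeasurableEquiv.map_apply,
    Measure.toSphere_apply' _ ((reflSph j).measurable hs),
    Measure.toSphere_apply' _ hs]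
  congr 1
  rw [image_coe_preimage_reflSph, smul_preimage_reflAt]
  have hemb : MeasurableEmbedding (reflAt j : EuclideanSpace ℝ (Fin n) → _) :=
    (reflAt j).toHomeomorph.measurableEmbedding
  rw [← hemb.map_apply, (reflAt j).measurePreserving.map_eq]

lemma map_sphereMeasure {n : ℕ} (j : Fin n) :
    Measure.map (reflSph j) (sphereMeasure n) = sphereMeasure n := by
  rw [sphereMeasure, Measure.map_smul, map_toSphere]

instance {n : ℕ} : IsFiniteMeasure (sphereMeasure n) := by
  constructor
  rw [sphereMeasure, Measure.smul_apply, smul_eq_mul]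
  exact lt_of_le_of_lt (ENNReal.inv_mul_le_one _) (by norm_num)

lemma lastCoord_eq {n : ℕ} (hn : 0 < n) (x : EuclideanSpace ℝ (Fin n)) :
    lastCoord n x = x ⟨n - 1, by omega⟩ := dif_pos hn

lemma lastCoord_reflAt {n : ℕ} (hn : 0 < n) (x : EuclideanSpace ℝ (Fin n)) :
    lastCoord n (reflAt (⟨n - 1, by omega⟩ : Fin n) x) = - lastCoord n x := by
  rw [lastCoord_eq hn, lastCoord_eq hn, reflAt_apply, if_pos rfl]

lemma hemiDiff_neg {n : ℕ} {x y : EuclideanSpace ℝ (Fin n)}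
    (h : lastCoord n y = - lastCoord n x) : hemiDiff n y = - hemiDiff n x := by
  simp only [hemiDiff, h]
  rcases lt_trichotomy (lastCoord n x) 0 with h' | h' | h'
  · simp [h'.le, h'.not_gt, not_le.2 h', neg_nonneg]
  · simp [h']
  · simp [h'.le, not_le.2 h', neg_nonpos, neg_nonneg, h'.not_gt]

lemma integral_hemiDiff {n : ℕ} (hn : 0 < n) :
    ∫ η : Sph n, hemiDiff n η.1 ∂ sphereMeasure n = 0 := by
  set j : Fin n := ⟨n - 1, by omega⟩ with hj
  have h1 : ∫ η : Sph n, hemiDiff n η.1 ∂ sphereMeasure n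
      = ∫ η : Sph n, hemiDiff n ((reflSph j η).1) ∂ sphereMeasure n := by
    conv_lhs => rw [← map_sphereMeasure j]
    exact integral_map_equiv _ _
  have h2 : ∀ η : Sph n, hemiDiff n ((reflSph j η).1) = - hemiDiff n η.1 := fun η =>
    hemiDiff_neg (lastCoord_reflAt hn η.1)
  have key : ∫ η : Sph n, hemiDiff n η.1 ∂ sphereMeasure n
      = - ∫ η : Sph n, hemiDiff n η.1 ∂ sphereMeasure n :=
    h1.trans (by simp only [h2]; exact integral_neg (fun η : Sph n => hemiDiff n η.1))
  linarith

lemma norm_eLast {n : ℕ} (hn : 0 < n) : ‖eLast n‖ = 1 := by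
  rw [eLast, dif_pos hn, EuclideanSpace.norm_single]; norm_num

lemma norm_x {n : ℕ} {r : ℝ} (hr0 : 0 ≤ r) (hn : 0 < n) : ‖r • eLast n‖ = r := by
  rw [norm_smul, norm_eLast hn, Real.norm_eq_abs, abs_of_nonneg hr0, mul_one]

lemma normsq_sub {n : ℕ} (hn : 0 < n) (r : ℝ) (hr0 : 0 ≤ r)
    (η : EuclideanSpace ℝ (Fin n)) (hη : ‖η‖ = 1) :
    ‖r • eLast n - η‖ ^ 2 = 1 + r ^ 2 - 2 * r * lastCoord n η := by
  rw [@norm_sub_sq_real, norm_x hr0 hn, hη, real_inner_smul_left]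
  have h : (inner ℝ (eLast n) η : ℝ) = lastCoord n η := by
    rw [eLast, dif_pos hn, lastCoord_eq hn]
    simpa using EuclideanSpace.inner_single_left (𝕜 := ℝ)
      (⟨n - 1, by omega⟩ : Fin n) (1 : ℝ) η
  rw [h]; ring

lemma sub_ne {n : ℕ} (hn : 0 < n) {r : ℝ} (hr0 : 0 ≤ r) (hr1 : r < 1) (η : Sph n) :
    r • eLast n - (η : EuclideanSpace ℝ (Fin n)) ≠ 0 := by
  intro h
  have hη : ‖(η : EuclideanSpace ℝ (Fin n))‖ = 1 := by
    simpa [mem_sphere_iff_norm] using η.2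
  have h2 : r • eLast n = (η : EuclideanSpace ℝ (Fin n)) := sub_eq_zero.1 h
  have := congrArg norm h2
  rw [norm_x hr0 hn, hη] at this
  linarith

lemma key_abs {n : ℕ} (hn : 0 < n) {r : ℝ} (hr0 : 0 ≤ r) (hr1 : r < 1) (η : Sph n) :
    |Ph n (r • eLast n) η.1 - ((1 - r ^ 2) / (1 + r ^ 2)) ^ (n - 1)|
      = (Ph n (r • eLast n) η.1 - ((1 - r ^ 2) / (1 + r ^ 2)) ^ (n - 1)) * hemiDiff n η.1 := by
  have hη : ‖(η : EuclideanSpace ℝ (Fin n))‖ = 1 := by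
    simpa [mem_sphere_iff_norm] using η.2
  set t := lastCoord n η.1 with ht
  have hD : ‖r • eLast n - η.1‖ ^ 2 = 1 + r ^ 2 - 2 * r * t := normsq_sub hn r hr0 η.1 hη
  have hDpos : 0 < 1 + r ^ 2 - 2 * r * t := by
    rw [← hD]
    exact pow_pos (norm_pos_iff.2 (sub_ne hn hr0 hr1 η)) 2
  have h1r2 : (0:ℝ) < 1 + r ^ 2 := by positivity
  have hnum : (0:ℝ) ≤ 1 - r ^ 2 := by nlinarith
  have hPh : Ph n (r • eLast n) η.1 = ((1 - r ^ 2) / (1 + r ^ 2 - 2 * r * t)) ^ (n - 1) := by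
    rw [Ph, hD, norm_x hr0 hn]
  rw [hPh]
  rcases lt_trichotomy t 0 with h' | h' | h'
  · have hs : hemiDiff n η.1 = -1 := by
      simp [hemiDiff, ← ht, h'.le, h'.not_ge]
    rw [hs]
    have hbase : (1 - r ^ 2) / (1 + r ^ 2 - 2 * r * t) ≤ (1 - r ^ 2) / (1 + r ^ 2) := by
      gcongr
      nlinarith
    have hle : ((1 - r ^ 2) / (1 + r ^ 2 - 2 * r * t)) ^ (n - 1)
        ≤ ((1 - r ^ 2) / (1 + r ^ 2)) ^ (n - 1) :=
      pow_le_pow_left₀ (by positivity) hbase _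
    rw [abs_of_nonpos (by linarith)]; ring
  · have hs : hemiDiff n η.1 = 0 := by
      simp [hemiDiff, ← ht, h']
    have h0 : 1 + r ^ 2 - 2 * r * t = 1 + r ^ 2 := by rw [h']; ring
    rw [hs, h0, sub_self, abs_zero, zero_mul]
  · have hs : hemiDiff n η.1 = 1 := by
      simp [hemiDiff, ← ht, h'.le, h'.not_ge]
    rw [hs, mul_one]
    have hbase : (1 - r ^ 2) / (1 + r ^ 2) ≤ (1 - r ^ 2) / (1 + r ^ 2 - 2 * r * t) := by
      gcongr
      nlinarith
    have hge : ((1 - r ^ 2) / (1 + r ^ 2)) ^ (n - 1)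
        ≤ ((1 - r ^ 2) / (1 + r ^ 2 - 2 * r * t)) ^ (n - 1) :=
      pow_le_pow_left₀ (by positivity) hbase _
    exact abs_of_nonneg (by linarith)

lemma contPh {n : ℕ} (hn : 0 < n) {r : ℝ} (hr0 : 0 ≤ r) (hr1 : r < 1) :
    Continuous (fun η : Sph n => Ph n (r • eLast n) η.1) := by
  unfold Ph
  apply Continuous.pow
  apply Continuous.div continuous_const
    ((continuous_const.sub continuous_subtype_val).norm.pow 2)
  intro η
  exact pow_ne_zero 2 (norm_ne_zero_iff.2 (sub_ne hn hr0 hr1 η))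

lemma contLast {n : ℕ} (hn : 0 < n) :
    Continuous (fun η : Sph n => lastCoord n η.1) := by
  have h : (fun η : Sph n => lastCoord n η.1)
      = fun η : Sph n => η.1 (⟨n - 1, by omega⟩ : Fin n) :=
    funext fun η => lastCoord_eq hn _
  rw [h]
  exact (continuous_apply (⟨n - 1, by omega⟩ : Fin n)).comp ((PiLp.continuous_ofLp 2 _).comp continuous_subtype_val)

lemma meas_hemiDiff {n : ℕ} (hn : 0 < n) :
    Measurable (fun η : Sph n => hemiDiff n η.1) := by
  have h1 : Measurable (fun η : Sph n => if 0 ≤ lastCoord n η.1 then (1:ℝ) else 0) :=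
    Measurable.ite (measurableSet_le measurable_const (contLast hn).measurable)
      measurable_const measurable_const
  have h2 : Measurable (fun η : Sph n => if lastCoord n η.1 ≤ 0 then (1:ℝ) else 0) :=
    Measurable.ite (measurableSet_le (contLast hn).measurable measurable_const)
      measurable_const measurable_const
  exact h1.sub h2

lemma abs_hemiDiff {n : ℕ} (η : EuclideanSpace ℝ (Fin n)) : |hemiDiff n η| ≤ 1 := by
  unfold hemiDiff
  split <;> split <;> norm_num

end Stmt12Aux

open Stmt12Aux

/-- `inf_{a ≥ 0} ∫ |P_h(re_n,η) - a| dσ = U_h(re_n)`, attained at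
`a* = ((1-r²)/(1+r²))^{n-1}`. -/
theorem stmt12 (n : ℕ) (hn : 2 ≤ n) (r : ℝ) (hr0 : 0 ≤ r) (hr1 : r < 1) :
    IsLeast ((fun a : ℝ => ∫ η : Sph n, |Ph n (r • eLast n) η.1 - a| ∂ sphereMeasure n) ''
        Set.Ici (0 : ℝ))
      (Uh n (r • eLast n)) ∧
    (∫ η : Sph n, |Ph n (r • eLast n) η.1 - ((1 - r ^ 2) / (1 + r ^ 2)) ^ (n - 1)|
        ∂ sphereMeasure n)
      = Uh n (r • eLast n) := by
  have hn0 : 0 < n := by omega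
  set x := r • eLast n with hx
  set astar : ℝ := ((1 - r ^ 2) / (1 + r ^ 2)) ^ (n - 1) with hastar
  have h1r2 : (0:ℝ) < 1 + r ^ 2 := by positivity
  have hnum : (0:ℝ) ≤ 1 - r ^ 2 := by nlinarith
  have hast_nonneg : 0 ≤ astar := pow_nonneg (div_nonneg hnum h1r2.le) _
  have hKcont : Continuous (fun η : Sph n => Ph n x η.1) := contPh hn0 hr0 hr1
  have hmeas_s : Measurable (fun η : Sph n => hemiDiff n η.1) := meas_hemiDiff hn0
  have hs_int : Integrable (fun η : Sph n => hemiDiff n η.1) (sphereMeasure n) :=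
    Integrable.mono' (integrable_const 1) hmeas_s.aestronglyMeasurable
      (ae_of_all _ fun η => by simpa using abs_hemiDiff η.1)
  obtain ⟨C, hC⟩ := isCompact_univ.exists_bound_of_continuousOn hKcont.continuousOn
  have hCK : ∀ η : Sph n, |Ph n x η.1| ≤ C := fun η => hC η (mem_univ _)
  have hK_int : Integrable (fun η : Sph n => Ph n x η.1) (sphereMeasure n) :=
    Integrable.mono' (integrable_const C) hKcont.aestronglyMeasurable
      (ae_of_all _ fun η => hCK η)
  have hKs_int : Integrable (fun η : Sph n => Ph n x η.1 * hemiDiff n η.1) (sphereMeasure n) := by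
    refine Integrable.mono' (integrable_const C)
      (hKcont.measurable.mul hmeas_s).aestronglyMeasurable (ae_of_all _ fun η => ?_)
    have h1 := hCK η
    have h2 := abs_hemiDiff η.1
    have h3 : (0:ℝ) ≤ |Ph n x η.1| := abs_nonneg _
    calc ‖Ph n x η.1 * hemiDiff n η.1‖ = |Ph n x η.1| * |hemiDiff n η.1| := by
          rw [Real.norm_eq_abs, abs_mul]
      _ ≤ C * 1 := mul_le_mul h1 h2 (abs_nonneg _) (le_trans h3 h1)
      _ = C := mul_one C
  have hzero : ∫ η : Sph n, hemiDiff n η.1 ∂ sphereMeasure n = 0 := integral_hemiDiff hn0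
  have hUh0 : Uh n x = ∫ η : Sph n, Ph n x η.1 * hemiDiff n η.1 ∂ sphereMeasure n := rfl
  have heq : (∫ η : Sph n, |Ph n x η.1 - astar| ∂ sphereMeasure n) = Uh n x := by
    have hpt : ∀ η : Sph n,
        |Ph n x η.1 - astar| = Ph n x η.1 * hemiDiff n η.1 - astar * hemiDiff n η.1 := fun η => by
      rw [key_abs hn0 hr0 hr1 η]; ring
    calc (∫ η : Sph n, |Ph n x η.1 - astar| ∂ sphereMeasure n)
        = ∫ η : Sph n, (Ph n x η.1 * hemiDiff n η.1 - astar * hemiDiff n η.1)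
            ∂ sphereMeasure n := integral_congr_ae (Filter.Eventually.of_forall hpt)
      _ = (∫ η : Sph n, Ph n x η.1 * hemiDiff n η.1 ∂ sphereMeasure n)
            - astar * ∫ η : Sph n, hemiDiff n η.1 ∂ sphereMeasure n := by
          rw [integral_sub hKs_int (hs_int.const_mul astar), integral_const_mul]
      _ = Uh n x := by
          rw [hzero, mul_zero, sub_zero]
          exact hUh0.symm
  refine ⟨⟨⟨astar, hast_nonneg, heq⟩, ?_⟩, heq⟩
  rintro y ⟨a, _, rfl⟩
  have habs_int : Integrable (fun η : Sph n => |Ph n x η.1 - a|) (sphereMeasure n) :=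
    (hK_int.sub (integrable_const a)).abs
  have hprod_int : Integrable (fun η : Sph n => (Ph n x η.1 - a) * hemiDiff n η.1)
      (sphereMeasure n) := by
    refine Integrable.mono' (integrable_const (C + |a|))
      (((hKcont.measurable.sub measurable_const).mul hmeas_s)).aestronglyMeasurable
      (ae_of_all _ fun η => ?_)
    have h1 := hCK η
    have h2 := abs_hemiDiff η.1
    have h4 : |Ph n x η.1 - a| ≤ C + |a| := by
      calc |Ph n x η.1 - a| ≤ |Ph n x η.1| + |a| := abs_sub _ _
        _ ≤ C + |a| := by linarith
    calc ‖(Ph n x η.1 - a) * hemiDiff n η.1‖ = |Ph n x η.1 - a| * |hemiDiff n η.1| := by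
          rw [Real.norm_eq_abs, abs_mul]
      _ ≤ (C + |a|) * 1 := mul_le_mul h4 h2 (abs_nonneg _) (le_trans (abs_nonneg _) h4)
      _ = C + |a| := mul_one _
  have hUh : Uh n x = ∫ η : Sph n, (Ph n x η.1 - a) * hemiDiff n η.1 ∂ sphereMeasure n := by
    have hsplit : ∀ η : Sph n, (Ph n x η.1 - a) * hemiDiff n η.1
        = Ph n x η.1 * hemiDiff n η.1 - a * hemiDiff n η.1 := fun η => by ring
    calc Uh n x = (∫ η : Sph n, Ph n x η.1 * hemiDiff n η.1 ∂ sphereMeasure n)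
          - a * ∫ η : Sph n, hemiDiff n η.1 ∂ sphereMeasure n := by
            rw [hzero, mul_zero, sub_zero]; exact hUh0
      _ = ∫ η : Sph n, (Ph n x η.1 * hemiDiff n η.1 - a * hemiDiff n η.1) ∂ sphereMeasure n := by
            rw [integral_sub hKs_int (hs_int.const_mul a), integral_const_mul]
      _ = ∫ η : Sph n, (Ph n x η.1 - a) * hemiDiff n η.1 ∂ sphereMeasure n :=
        integral_congr_ae (Filter.Eventually.of_forall fun η => (hsplit η).symm)
  show Uh n x ≤ ∫ η : Sph n, |Ph n x η.1 - a| ∂ sphereMeasure n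
  rw [hUh]
  refine integral_mono hprod_int habs_int fun η => ?_
  calc (Ph n x η.1 - a) * hemiDiff n η.1 ≤ |(Ph n x η.1 - a) * hemiDiff n η.1| := le_abs_self _
    _ = |Ph n x η.1 - a| * |hemiDiff n η.1| := abs_mul _ _
    _ ≤ |Ph n x η.1 - a| * 1 := mul_le_mul_of_nonneg_left (abs_hemiDiff η.1) (abs_nonneg _)
    _ = |Ph n x η.1 - a| := mul_one _
end
end

section
/- For n = 3 and 0 ≤ r < 1, U_h(r e_3) = 2r/(1+r^2), where U_h = P_h[χ_{S_+^2} − χ_{S_-^2}] is the invariant Poisson integral in the unit ball of ℝ^3 of the difference of hemisphere indicators. -/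
open MeasureTheory Metric Real Set

noncomputable section

open intervalIntegral

local notation "E3" => EuclideanSpace ℝ (Fin 3)
local notation "E2" => EuclideanSpace ℝ (Fin 2)

/-- sign-ish factor -/
def Sgn (t : ℝ) : ℝ := (if 0 ≤ t then (1:ℝ) else 0) - (if t ≤ 0 then (1:ℝ) else 0)

def G (r t : ℝ) : ℝ := Sgn t * ((1 - r^2)^2 / (1 + r^2 - 2*r*t)^2)

def Q (r z s : ℝ) : ℝ := if |z| < s ∧ s ≤ 1 then s * G r (z/s) else 0

def fz (r z : ℝ) : ℝ → ℝ := fun ρ => if z^2 + ρ^2 ≤ 1 then G r (z / Real.sqrt (z^2 + ρ^2)) else 0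

def f3 (r : ℝ) : EuclideanSpace ℝ (Fin 3) → ℝ :=
  fun x => if ‖x‖ ≤ 1 then G r (lastCoord 3 x / ‖x‖) else 0

variable {r : ℝ}


lemma Sgn_meas : Measurable Sgn := by
  unfold Sgn
  exact Measurable.sub (Measurable.ite (measurableSet_le measurable_const measurable_id)
    measurable_const measurable_const)
    (Measurable.ite (measurableSet_le measurable_id measurable_const)
    measurable_const measurable_const)

lemma G_meas : Measurable (G r) := by
  unfold G
  exact Sgn_meas.mul ((measurable_const.div ((measurable_const.sub
    (measurable_const.mul measurable_id)).pow measurable_const)))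

lemma Sgn_pos {t : ℝ} (ht : 0 < t) : Sgn t = 1 := by
  simp [Sgn, ht.le, not_le.2 ht]

lemma Sgn_neg {t : ℝ} (ht : t < 0) : Sgn t = -1 := by
  simp [Sgn, ht.le, not_le.2 ht]

lemma denom_pos (hr0 : 0 ≤ r) (hr1 : r < 1) {t : ℝ} (ht : |t| ≤ 1) :
    0 < 1 + r^2 - 2*r*t := by
  rcases abs_le.1 ht with ⟨h1, h2⟩
  nlinarith [sq_nonneg (1 - r), sq_nonneg (1 + r), sq_nonneg r]

lemma G_bound (hr0 : 0 ≤ r) (hr1 : r < 1) {t : ℝ} (ht : |t| ≤ 1) :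
    |G r t| ≤ (1+r)^2/(1-r)^2 := by
  have hd : 0 < 1 + r^2 - 2*r*t := denom_pos hr0 hr1 ht
  have hd2 : (1-r)^4 ≤ (1 + r^2 - 2*r*t)^2 := by
    have h1 : (1-r)^2 ≤ 1 + r^2 - 2*r*t := by
      rcases abs_le.1 ht with ⟨_, h2⟩; nlinarith
    nlinarith [sq_nonneg (1-r), sq_nonneg ((1-r)^2)]
  have hS : |Sgn t| ≤ 1 := by unfold Sgn; split_ifs <;> norm_num
  have h1r : (0:ℝ) < 1 - r := by linarith
  calc |G r t| = |Sgn t| * |(1 - r^2)^2 / (1 + r^2 - 2*r*t)^2| := abs_mul _ _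
    _ ≤ 1 * |(1 - r^2)^2 / (1 + r^2 - 2*r*t)^2| := by
        apply mul_le_mul_of_nonneg_right hS (abs_nonneg _)
    _ = (1 - r^2)^2 / (1 + r^2 - 2*r*t)^2 := by
        rw [one_mul, abs_of_nonneg (by positivity)]
    _ ≤ (1 - r^2)^2 / (1-r)^4 := by
        apply div_le_div_of_nonneg_left (by positivity) (by positivity) hd2
    _ = (1+r)^2/(1-r)^2 := by
        rw [div_eq_div_iff (by positivity) (by positivity)]
        ring

lemma G_intble (hr0 : 0 ≤ r) (hr1 : r < 1) {a b : ℝ} (ha : -1 ≤ a) (hb : b ≤ 1) (hab : a ≤ b) :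
    IntervalIntegrable (G r) volume a b := by
  rw [intervalIntegrable_iff_integrableOn_Ioc_of_le hab]
  apply Measure.integrableOn_of_bounded (M := (1+r)^2/(1-r)^2) measure_Ioc_lt_top.ne
    (G_meas.aestronglyMeasurable)
  filter_upwards [ae_restrict_mem measurableSet_Ioc] with t ht
  exact G_bound hr0 hr1 (abs_le.2 ⟨by linarith [ht.1], le_trans ht.2 hb⟩)

lemma FTC_piece (hr0 : 0 ≤ r) (hr1 : r < 1) {a b : ℝ} (ha : -1 ≤ a) (hb : b ≤ 1) (hab : a ≤ b) :
    ∫ t in a..b, (1 - r^2)^2 / (1 + r^2 - 2*r*t)^2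
      = (1-r^2)^2 * b / ((1+r^2) * (1+r^2 - 2*r*b))
        - (1-r^2)^2 * a / ((1+r^2) * (1+r^2 - 2*r*a)) := by
  have key : ∀ t ∈ Set.uIcc a b, HasDerivAt (fun t => (1-r^2)^2 * t / ((1+r^2) * (1+r^2 - 2*r*t)))
      ((1 - r^2)^2 / (1 + r^2 - 2*r*t)^2) t := by
    intro t ht
    rw [Set.uIcc_of_le hab] at ht
    have habs : |t| ≤ 1 := abs_le.2 ⟨by linarith [ht.1], le_trans ht.2 hb⟩
    have hd : 0 < 1 + r^2 - 2*r*t := denom_pos hr0 hr1 habs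
    have h1 : HasDerivAt (fun t : ℝ => (1+r^2) * (1+r^2 - 2*r*t)) ((1+r^2) * (-(2*r))) t := by
      simpa using (((hasDerivAt_id t).const_mul (2*r)).const_sub (1+r^2)).const_mul (1+r^2)
    have h2 : HasDerivAt (fun t : ℝ => (1-r^2)^2 * t) ((1-r^2)^2) t := by
      simpa using (hasDerivAt_id t).const_mul ((1-r^2)^2)
    have := h2.div h1 (by positivity)
    refine this.congr_deriv ?_
    have hane : (1+r^2) ≠ 0 := by positivity
    rw [div_eq_div_iff (pow_ne_zero 2 (mul_ne_zero hane hd.ne')) (pow_ne_zero 2 hd.ne')]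
    ring
  rw [intervalIntegral.integral_eq_sub_of_hasDerivAt key]
  apply ContinuousOn.intervalIntegrable
  apply ContinuousOn.div continuousOn_const (by fun_prop)
  intro t ht
  rw [Set.uIcc_of_le hab] at ht
  have : 0 < 1 + r^2 - 2*r*t :=
    denom_pos hr0 hr1 (abs_le.2 ⟨by linarith [ht.1], le_trans ht.2 hb⟩)
  positivity

lemma K_val (hr0 : 0 ≤ r) (hr1 : r < 1) :
    ∫ t in (-1:ℝ)..1, G r t = 4*r/(1+r^2) := by
  have h1 : ∫ t in (0:ℝ)..1, G r t = (1+r)^2/(1+r^2) := by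
    rw [intervalIntegral.integral_of_le (by norm_num : (0:ℝ) ≤ 1)]
    rw [setIntegral_congr_fun measurableSet_Ioc (g := fun t => (1 - r^2)^2 / (1 + r^2 - 2*r*t)^2)
      (fun t ht => by simp [G, Sgn_pos ht.1])]
    rw [← intervalIntegral.integral_of_le (by norm_num : (0:ℝ) ≤ 1),
      FTC_piece hr0 hr1 (by norm_num) le_rfl (by norm_num)]
    have h2 : (1:ℝ)+r^2-2*r*1 = (1-r)^2 := by ring
    have hr : (1:ℝ) - r ≠ 0 := by intro h; nlinarith
    have hane : (1:ℝ)+r^2 ≠ 0 := by positivity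
    rw [h2]
    field_simp
    ring
  have h2 : ∫ t in (-1:ℝ)..0, G r t = -((1-r)^2/(1+r^2)) := by
    rw [intervalIntegral.integral_of_le (by norm_num : (-1:ℝ) ≤ 0),
      integral_Ioc_eq_integral_Ioo]
    rw [setIntegral_congr_fun measurableSet_Ioo
      (g := fun t => -((1 - r^2)^2 / (1 + r^2 - 2*r*t)^2))
      (fun t ht => by simp [G, Sgn_neg ht.2])]
    rw [MeasureTheory.integral_neg, ← integral_Ioc_eq_integral_Ioo,
      ← intervalIntegral.integral_of_le (by norm_num : (-1:ℝ) ≤ 0),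
      FTC_piece hr0 hr1 le_rfl (by norm_num) (by norm_num)]
    have h2 : (1:ℝ)+r^2-2*r*(-1) = (1+r)^2 := by ring
    have hr : (1:ℝ) + r ≠ 0 := by positivity
    have hane : (1:ℝ)+r^2 ≠ 0 := by positivity
    rw [h2]
    field_simp
    ring
  have := intervalIntegral.integral_add_adjacent_intervals
    (G_intble hr0 hr1 (le_refl (-1)) (by norm_num) (by norm_num) : IntervalIntegrable (G r) volume (-1) 0)
    (G_intble hr0 hr1 (by norm_num) le_rfl (by norm_num))
  rw [← this, h1, h2]
  have hane : (1:ℝ)+r^2 ≠ 0 := by positivity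
  field_simp
  ring

lemma G_zero : G r 0 = 0 := by simp [G, Sgn]

lemma Sgn_div_pos {z s : ℝ} (hs : 0 < s) : Sgn (z/s) = Sgn z := by
  unfold Sgn
  rcases lt_trichotomy z 0 with h | h | h
  · rw [if_neg, if_pos, if_neg, if_pos] <;>
      simp [le_of_lt, div_nonpos_iff, div_nonneg_iff, h, hs, not_le, h.le, hs.le,
        div_neg_of_neg_of_pos h hs, le_of_lt (div_neg_of_neg_of_pos h hs)]
  · simp [h]
  · rw [if_pos, if_neg, if_pos, if_neg] <;>
      simp [not_le, h, hs, div_pos h hs, h.le, le_of_lt (div_pos h hs)]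

lemma g_cont (hr0 : 0 ≤ r) (hr1 : r < 1) {z : ℝ} (hz : z ≠ 0) (hz1 : |z| ≤ 1) :
    ContinuousOn (fun s => s * G r (z/s)) (Icc |z| 1) := by
  have habs : ∀ s ∈ Icc |z| 1, |z/s| ≤ 1 ∧ 0 < s := by
    intro s hs
    have hs0 : 0 < s := lt_of_lt_of_le (abs_pos.2 hz) hs.1
    refine ⟨?_, hs0⟩
    rw [abs_div, abs_of_pos hs0, div_le_one hs0]; exact hs.1
  apply ContinuousOn.congr (f := fun s => s * (Sgn z * ((1 - r^2)^2 / (1 + r^2 - 2*r*(z/s))^2)))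
  · apply continuousOn_id.mul (continuousOn_const.mul (continuousOn_const.div ?_ ?_))
    · apply ContinuousOn.pow
      exact (continuousOn_const.sub (continuousOn_const.mul
        (continuousOn_const.div continuousOn_id (fun s hs => (habs s hs).2.ne'))))
    · intro s hs
      exact (pow_ne_zero 2 (denom_pos hr0 hr1 (habs s hs).1).ne')
  · intro s hs
    simp only [G, Sgn_div_pos (habs s hs).2]

lemma inner_subst (hr0 : 0 ≤ r) (hr1 : r < 1) (z : ℝ) :
    ∫ ρ in Ioi (0:ℝ), (ρ * (if z^2 + ρ^2 ≤ 1 then G r (z / Real.sqrt (z^2 + ρ^2)) else 0))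
      = ∫ s in Ioi (0:ℝ), (if |z| < s ∧ s ≤ 1 then s * G r (z/s) else 0) := by
  rcases eq_or_ne z 0 with rfl | hz
  · have e1 : EqOn (fun ρ : ℝ => ρ * (if (0:ℝ)^2 + ρ^2 ≤ 1 then G r (0 / Real.sqrt (0^2 + ρ^2)) else 0))
        (fun _ => (0:ℝ)) (Ioi 0) := by
      intro ρ _; simp [G, Sgn]
    have e2 : EqOn (fun s : ℝ => (if |(0:ℝ)| < s ∧ s ≤ 1 then s * G r (0/s) else 0))
        (fun _ => (0:ℝ)) (Ioi 0) := by
      intro s _; simp [G, Sgn]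
    rw [setIntegral_congr_fun measurableSet_Ioi e1, setIntegral_congr_fun measurableSet_Ioi e2]
  rcases lt_or_ge 1 |z| with hz1 | hz1
  · have e1 : EqOn (fun ρ : ℝ => ρ * (if z^2 + ρ^2 ≤ 1 then G r (z / Real.sqrt (z^2 + ρ^2)) else 0))
        (fun _ => (0:ℝ)) (Ioi 0) := by
      intro ρ hρ
      have h2 : ¬ (z^2 + ρ^2 ≤ 1) := by
        have h3 : 1 < |z|^2 := by nlinarith
        rw [sq_abs] at h3
        have : (0:ℝ) < ρ := hρ
        nlinarith
      simp [h2]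
    have e2 : EqOn (fun s : ℝ => (if |z| < s ∧ s ≤ 1 then s * G r (z/s) else 0))
        (fun _ => (0:ℝ)) (Ioi 0) := by
      intro s _
      have : ¬ (|z| < s ∧ s ≤ 1) := by rintro ⟨h1, h2⟩; linarith
      simp [this]
    rw [setIntegral_congr_fun measurableSet_Ioi e1, setIntegral_congr_fun measurableSet_Ioi e2]
  -- main case : 0 < |z| ≤ 1
  have hz0 : 0 < |z| := abs_pos.2 hz
  set R := Real.sqrt (1 - z^2) with hR
  have hz2 : z^2 ≤ 1 := by nlinarith [sq_abs z]
  have hR2 : R^2 = 1 - z^2 := Real.sq_sqrt (by linarith)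
  have hR0 : 0 ≤ R := Real.sqrt_nonneg _
  set φ : ℝ → ℝ := fun ρ => Real.sqrt (z^2 + ρ^2) with hφ
  have hφpos : ∀ ρ : ℝ, 0 < z^2 + ρ^2 := by
    intro ρ; nlinarith [sq_abs z, sq_nonneg ρ]
  have hφval : ∀ ρ : ℝ, 0 < φ ρ := fun ρ => Real.sqrt_pos.2 (hφpos ρ)
  have hφder : ∀ ρ : ℝ, HasDerivAt φ (ρ / φ ρ) ρ := by
    intro ρ
    have h1 : HasDerivAt (fun ρ : ℝ => z^2 + ρ^2) (2*ρ) ρ := by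
      simpa using ((hasDerivAt_pow 2 ρ).const_add (z^2))
    have := h1.sqrt (hφpos ρ).ne'
    convert this using 1
    rw [hφ]
    field_simp
  have hiff : ∀ ρ : ℝ, 0 < ρ → (z^2 + ρ^2 ≤ 1 ↔ ρ ≤ R) := by
    intro ρ hρ
    rw [hR, Real.le_sqrt' hρ]
    constructor <;> intro h <;> nlinarith
  have lhs1 : ∫ ρ in Ioi (0:ℝ), (ρ * (if z^2 + ρ^2 ≤ 1 then G r (z / φ ρ) else 0))
      = ∫ ρ in (0:ℝ)..R, ρ * G r (z / φ ρ) := by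
    have e1 : EqOn (fun ρ : ℝ => ρ * (if z^2 + ρ^2 ≤ 1 then G r (z / φ ρ) else 0))
        ((Ioc (0:ℝ) R).indicator (fun ρ => ρ * G r (z / φ ρ))) (Ioi 0) := by
      intro ρ hρ
      have hρ' : (0:ℝ) < ρ := hρ
      simp only [Set.indicator_apply, Set.mem_Ioc]
      by_cases h : z^2 + ρ^2 ≤ 1
      · rw [if_pos h, if_pos ⟨hρ', (hiff ρ hρ').1 h⟩]
      · rw [if_neg h, mul_zero, if_neg]
        rintro ⟨h1, h2⟩
        exact h ((hiff ρ hρ').2 h2)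
    rw [setIntegral_congr_fun measurableSet_Ioi e1,
      setIntegral_indicator measurableSet_Ioc,
      show Ioi (0:ℝ) ∩ Ioc 0 R = Ioc 0 R by
        rw [Set.inter_eq_right]; exact Ioc_subset_Ioi_self,
      intervalIntegral.integral_of_le hR0]
  have rhs1 : ∫ s in Ioi (0:ℝ), (if |z| < s ∧ s ≤ 1 then s * G r (z/s) else 0)
      = ∫ s in |z|..1, s * G r (z/s) := by
    have e2 : EqOn (fun s : ℝ => (if |z| < s ∧ s ≤ 1 then s * G r (z/s) else 0))
        ((Ioc |z| 1).indicator (fun s => s * G r (z/s))) (Ioi 0) := by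
      intro s _
      simp only [Set.indicator_apply, Set.mem_Ioc]
    rw [setIntegral_congr_fun measurableSet_Ioi e2,
      setIntegral_indicator measurableSet_Ioc,
      show Ioi (0:ℝ) ∩ Ioc |z| 1 = Ioc |z| 1 by
        rw [Set.inter_eq_right]
        exact fun s hs => lt_of_le_of_lt hz0.le hs.1,
      intervalIntegral.integral_of_le hz1]
  rw [lhs1, rhs1]
  -- substitution
  have himg : φ '' (Set.uIcc 0 R) ⊆ Icc |z| 1 := by
    rintro - ⟨ρ, hρ, rfl⟩
    rw [Set.uIcc_of_le hR0] at hρ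
    constructor
    · rw [hφ]
      calc |z| = Real.sqrt (z^2) := (Real.sqrt_sq_eq_abs z).symm
      _ ≤ _ := Real.sqrt_le_sqrt (by nlinarith [sq_nonneg ρ])
    · rw [hφ, show (1:ℝ) = Real.sqrt 1 by simp]
      apply Real.sqrt_le_sqrt
      rcases hρ with ⟨h1, h2⟩
      nlinarith
  have key := intervalIntegral.integral_comp_smul_deriv' (a := 0) (b := R)
    (f := φ) (f' := fun ρ => ρ / φ ρ) (g := fun s => s * G r (z/s))
    (fun x _ => hφder x)
    (by
      apply ContinuousOn.div continuousOn_id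
      · exact (Real.continuous_sqrt.comp (by fun_prop)).continuousOn
      · exact fun ρ _ => (hφval ρ).ne')
    ((g_cont hr0 hr1 hz hz1).mono himg)
  have hφ0 : φ 0 = |z| := by rw [hφ]; simp [Real.sqrt_sq_eq_abs]
  have hφR : φ R = 1 := by
    have h : z^2 + R^2 = 1 := by rw [hR2]; ring
    simp only [hφ]
    rw [h, Real.sqrt_one]
  rw [hφ0, hφR] at key
  rw [← key]
  apply intervalIntegral.integral_congr
  intro ρ hρ
  have : φ ρ ∈ Icc |z| 1 := himg ⟨ρ, hρ, rfl⟩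
  simp only [smul_eq_mul, Function.comp]
  field_simp
  rw [eq_div_iff (hφval ρ).ne']
  ring

lemma Q_meas : Measurable (Function.uncurry (Q r)) := by
  have : Function.uncurry (Q r) = Set.indicator {p : ℝ × ℝ | |p.1| < p.2 ∧ p.2 ≤ 1}
      (fun p => p.2 * G r (p.1 / p.2)) := by
    ext p
    simp only [Function.uncurry, Q, Set.indicator_apply, Set.mem_setOf_eq]
  rw [this]
  apply Measurable.indicator
  · exact measurable_snd.mul (G_meas.comp (measurable_fst.div measurable_snd))
  · exact MeasurableSet.inter
      (measurableSet_lt (measurable_fst.abs) measurable_snd)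
      (measurableSet_le measurable_snd measurable_const)

lemma Q_intble (hr0 : 0 ≤ r) (hr1 : r < 1) :
    Integrable (Function.uncurry (Q r)) (volume.prod volume) := by
  set M : ℝ := (1+r)^2/(1-r)^2 with hM
  have hM0 : 0 ≤ M := by
    have : (0:ℝ) < 1 - r := by linarith
    positivity
  apply Integrable.mono' (g := (Icc (-1:ℝ) 1 ×ˢ Icc (0:ℝ) 1).indicator (fun _ => M))
  · rw [integrable_indicator_iff (MeasurableSet.prod measurableSet_Icc measurableSet_Icc)]
    refine integrableOn_const (ne_of_lt ?_)
    rw [Measure.prod_prod]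
    exact ENNReal.mul_lt_top (by simp) (by simp)
  · exact Q_meas.aestronglyMeasurable
  · apply Filter.Eventually.of_forall
    rintro ⟨z, s⟩
    simp only [Function.uncurry, Q]
    by_cases h : |z| < s ∧ s ≤ 1
    · obtain ⟨h1, h2⟩ := h
      have hs0 : 0 < s := lt_of_le_of_lt (abs_nonneg z) h1
      have hin : (z, s) ∈ Icc (-1:ℝ) 1 ×ˢ Icc (0:ℝ) 1 := by
        constructor
        · have := abs_le.1 (le_of_lt (lt_of_lt_of_le h1 h2))
          exact ⟨this.1, this.2⟩
        · exact ⟨hs0.le, h2⟩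
      rw [if_pos ⟨h1, h2⟩, Set.indicator_of_mem hin]
      have habs : |z/s| ≤ 1 := by
        rw [abs_div, abs_of_pos hs0, div_le_one hs0]; exact h1.le
      calc |s * G r (z/s)| = |s| * |G r (z/s)| := abs_mul _ _
        _ ≤ 1 * M := by
            apply mul_le_mul _ (G_bound hr0 hr1 habs) (abs_nonneg _) zero_le_one
            rw [abs_of_pos hs0]; exact h2
        _ = M := one_mul M
    · rw [if_neg h, norm_zero]
      exact Set.indicator_apply_nonneg (fun _ => hM0)
  
lemma inner_z (hr0 : 0 ≤ r) (hr1 : r < 1) (s : ℝ) :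
    ∫ z : ℝ, Q r z s = Set.indicator (Ioc (0:ℝ) 1)
      (fun s => s^2 * (4*r/(1+r^2))) s := by
  rcases le_or_gt s 0 with hs | hs
  · rw [Set.indicator_of_notMem (fun hmem => absurd hmem.1 (not_lt.2 hs))]
    have : (fun z : ℝ => Q r z s) = fun _ => 0 := by
      funext z
      rw [Q, if_neg]
      rintro ⟨h1, _⟩
      exact absurd (lt_of_le_of_lt (abs_nonneg z) h1) (not_lt.2 hs)
    rw [this, MeasureTheory.integral_zero]
  rcases le_or_gt s 1 with hs1 | hs1
  swap
  · rw [Set.indicator_of_notMem (fun hmem => absurd hmem.2 (not_le.2 hs1))]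
    have : (fun z : ℝ => Q r z s) = fun _ => 0 := by
      funext z
      rw [Q, if_neg]
      rintro ⟨_, h2⟩
      linarith
    rw [this, MeasureTheory.integral_zero]
  · rw [Set.indicator_of_mem (show s ∈ Ioc (0:ℝ) 1 from ⟨hs, hs1⟩)]
    have he : (fun z : ℝ => Q r z s) = Set.indicator (Ioo (-s) s) (fun z => s * G r (z/s)) := by
      funext z
      simp only [Q, Set.indicator_apply, Set.mem_Ioo]
      by_cases h : |z| < s
      · rw [if_pos (And.intro h hs1), if_pos (abs_lt.1 h)]
      · rw [if_neg (fun hh => h hh.1), if_neg (fun hh => h (abs_lt.2 hh))]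
    rw [he, MeasureTheory.integral_indicator measurableSet_Ioo, ← integral_Ioc_eq_integral_Ioo,
      ← intervalIntegral.integral_of_le (by linarith : -s ≤ s)]
    rw [intervalIntegral.integral_const_mul, intervalIntegral.integral_comp_div
      (f := G r) (by linarith : s ≠ 0)]
    rw [neg_div, div_self (by linarith : s ≠ 0), K_val hr0 hr1]
    simp only [smul_eq_mul]
    ring

lemma swap_eval (hr0 : 0 ≤ r) (hr1 : r < 1) :
    ∫ z : ℝ, ∫ s in Ioi (0:ℝ), Q r z s = (4*r/(1+r^2))/3 := by
  have h1 : ∀ z : ℝ, ∫ s in Ioi (0:ℝ), Q r z s = ∫ s : ℝ, Q r z s := by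
    intro z
    apply setIntegral_eq_integral_of_forall_compl_eq_zero
    intro s hs
    rw [Q, if_neg]
    rintro ⟨hh1, _⟩
    exact hs (lt_of_le_of_lt (abs_nonneg z) hh1)
  simp only [h1]
  rw [integral_integral_swap (Q_intble hr0 hr1)]
  have h2 : (fun s : ℝ => ∫ z : ℝ, Q r z s)
      = Set.indicator (Ioc (0:ℝ) 1) (fun s => s^2 * (4*r/(1+r^2))) := by
    funext s; exact inner_z hr0 hr1 s
  rw [h2, MeasureTheory.integral_indicator measurableSet_Ioc, ← intervalIntegral.integral_of_le zero_le_one,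
    intervalIntegral.integral_mul_const, integral_pow]
  norm_num
  ring

lemma coord_abs_le {n : ℕ} (η : EuclideanSpace ℝ (Fin n)) (i : Fin n) :
    |η i| ≤ ‖η‖ := by
  have h := abs_real_inner_le_norm (EuclideanSpace.single i (1:ℝ)) η
  rw [EuclideanSpace.inner_single_left, EuclideanSpace.norm_single] at h
  simpa using h

lemma eLast3 : eLast 3 = EuclideanSpace.single (⟨2, by norm_num⟩ : Fin 3) (1:ℝ) := by
  rw [eLast, dif_pos (by norm_num)]

lemma lastCoord3 (η : EuclideanSpace ℝ (Fin 3)) :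
    lastCoord 3 η = η (⟨2, by norm_num⟩ : Fin 3) := by
  rw [lastCoord, dif_pos (by norm_num)]

-- (A1)
lemma sphere_integrand (hr0 : 0 ≤ r) (hr1 : r < 1) (η : Sph 3) :
    Ph 3 (r • eLast 3) η.1 * hemiDiff 3 η.1 = G r (lastCoord 3 η.1) := by
  obtain ⟨η, hη⟩ := η
  rw [mem_sphere_zero_iff_norm] at hη
  have hnorm : ‖r • eLast 3‖^2 = r^2 := by
    rw [eLast3, norm_smul, EuclideanSpace.norm_single, norm_one, mul_one, Real.norm_eq_abs,
      sq_abs]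
  have hinner : inner ℝ (r • eLast 3) η = r * lastCoord 3 η := by
    rw [eLast3, real_inner_smul_left, EuclideanSpace.inner_single_left, lastCoord3]
    simp
  have hsub : ‖r • eLast 3 - η‖^2 = 1 + r^2 - 2*r*(lastCoord 3 η) := by
    rw [norm_sub_sq_real, hnorm, hinner, hη]
    ring
  have hd : 0 < 1 + r^2 - 2*r*(lastCoord 3 η) := by
    apply denom_pos hr0 hr1
    rw [lastCoord3]
    calc |η _| ≤ ‖η‖ := coord_abs_le η _
    _ = 1 := hη
  rw [Ph, hsub, hnorm, hemiDiff, G, Sgn]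
  rw [show (3-1 : ℕ) = 2 from rfl, div_pow]
  ring


lemma vol_ball3 : (volume : Measure E3) (ball 0 1) = ENNReal.ofReal (4/3*π) := by
  rw [EuclideanSpace.volume_ball]
  have hc : Fintype.card (Fin 3) = 3 := Fintype.card_fin 3
  rw [hc]
  have h1 : ((3:ℕ):ℝ)/2 + 1 = 3/2 + 1 := by norm_num
  have h2 : Real.Gamma (3/2 + 1) = (3/2) * Real.Gamma (3/2) := Real.Gamma_add_one (by norm_num)
  have h3 : Real.Gamma (3/2) = (1/2) * Real.Gamma (1/2) := by
    rw [show (3:ℝ)/2 = 1/2 + 1 by norm_num, Real.Gamma_add_one (by norm_num)]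
  have h4 : Real.sqrt π ^ 3 = π * Real.sqrt π := by
    rw [pow_succ, Real.sq_sqrt pi_nonneg]
  have h5 : Real.sqrt π ≠ 0 := (Real.sqrt_pos.2 pi_pos).ne'
  rw [h1, h2, h3, Real.Gamma_one_half_eq, h4]
  norm_num
  rw [(show π * Real.sqrt π / (3/2 * (1/2 * Real.sqrt π)) = 4/3*π by field_simp; ring)]
  rw [ENNReal.ofReal_mul (by norm_num)]

lemma vol_ball2 : (volume : Measure E2) (ball 0 1) = ENNReal.ofReal π := by
  rw [EuclideanSpace.volume_ball]
  have hc : Fintype.card (Fin 2) = 2 := Fintype.card_fin 2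
  rw [hc]
  have h1 : ((2:ℕ):ℝ)/2 + 1 = 2 := by norm_num
  rw [h1, Real.Gamma_two, Real.sq_sqrt pi_nonneg]
  norm_num

lemma toSphere_univ3 : (volume : Measure E3).toSphere Set.univ = ENNReal.ofReal (4*π) := by
  rw [Measure.toSphere_apply_univ, vol_ball3]
  have hd : Module.finrank ℝ E3 = 3 := by
    rw [finrank_euclideanSpace, Fintype.card_fin]
  rw [hd, (show ((3:ℕ): ENNReal) = ENNReal.ofReal 3 by simp), ← ENNReal.ofReal_mul (by norm_num),
    (show (3:ℝ) * (4/3*π) = 4*π by ring)]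

-- (A2)
lemma Uh_eq (hr0 : 0 ≤ r) (hr1 : r < 1) :
    Uh 3 (r • eLast 3) = (4*π)⁻¹ *
      ∫ η : Sph 3, G r (lastCoord 3 η.1) ∂((volume : Measure E3).toSphere) := by
  rw [Uh, sphereMeasure, MeasureTheory.integral_smul_measure, toSphere_univ3, ENNReal.toReal_inv,
    ENNReal.toReal_ofReal (by positivity), smul_eq_mul]
  congr 1
  exact integral_congr_ae (Filter.Eventually.of_forall (sphere_integrand hr0 hr1))


-- weight integral
lemma weight_int :
    ∫ t : (Ioi (0:ℝ)), (if t.1 ≤ 1 then (1:ℝ) else 0) ∂(Measure.volumeIoiPow 2) = 1/3 := by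
  rw [Measure.volumeIoiPow]
  simp only [ENNReal.ofReal]
  rw [integral_withDensity_eq_integral_smul
    ((measurable_subtype_coe.pow_const 2).real_toNNReal),
    integral_subtype_comap measurableSet_Ioi
      (fun y : ℝ => Real.toNNReal (y^2) • (if y ≤ 1 then (1:ℝ) else 0))]
  have he : EqOn (fun y : ℝ => Real.toNNReal (y^2) • (if y ≤ 1 then (1:ℝ) else 0))
      ((Ioc (0:ℝ) 1).indicator (fun y => y^2)) (Ioi 0) := by
    intro y (hy : 0 < y)
    simp only [Set.indicator_apply, Set.mem_Ioc, NNReal.smul_def,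
      Real.coe_toNNReal _ (sq_nonneg y)]
    by_cases h : y ≤ 1
    · rw [if_pos h, if_pos ⟨hy, h⟩, smul_eq_mul, mul_one]
    · rw [if_neg h, if_neg (fun hh => h hh.2), smul_eq_mul, mul_zero]
  rw [setIntegral_congr_fun measurableSet_Ioi he, setIntegral_indicator measurableSet_Ioc,
    (show Ioi (0:ℝ) ∩ Ioc 0 1 = Ioc 0 1 by rw [Set.inter_eq_right]; exact Ioc_subset_Ioi_self),
    ← intervalIntegral.integral_of_le zero_le_one, integral_pow]
  norm_num

-- (B)
lemma polar3 (hr0 : 0 ≤ r) (hr1 : r < 1) :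
    ∫ x : E3, f3 r x =
      (∫ η : Sph 3, G r (lastCoord 3 η.1) ∂((volume : Measure E3).toSphere)) * (1/3) := by
  have hdim : Module.finrank ℝ E3 - 1 = 2 := by
    rw [finrank_euclideanSpace, Fintype.card_fin]
  calc ∫ x : E3, f3 r x
      = ∫ x : ({0}ᶜ : Set E3), f3 r x.1 ∂((volume : Measure E3).comap Subtype.val) := by
        rw [integral_subtype_comap (measurableSet_singleton (0:E3)).compl (fun x => f3 r x),
          MeasureTheory.restrict_compl_singleton]
    _ = ∫ p : Sph 3 × Ioi (0:ℝ),
          (fun q => f3 r ((homeomorphUnitSphereProd E3).symm q).1) p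
          ∂((volume : Measure E3).toSphere.prod (Measure.volumeIoiPow
            (Module.finrank ℝ E3 - 1))) := by
        rw [← (volume : Measure E3).measurePreserving_homeomorphUnitSphereProd.integral_comp
          (Homeomorph.measurableEmbedding _)
          (fun q => f3 r ((homeomorphUnitSphereProd E3).symm q).1)]
        congr 1
        funext x
        rw [Homeomorph.symm_apply_apply]
    _ = ∫ p : Sph 3 × Ioi (0:ℝ),
          (G r (lastCoord 3 p.1.1)) * (if p.2.1 ≤ 1 then (1:ℝ) else 0)
          ∂((volume : Measure E3).toSphere.prod (Measure.volumeIoiPow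
            (Module.finrank ℝ E3 - 1))) := by
        congr 1
        funext p
        obtain ⟨⟨η, hη⟩, ⟨t, ht⟩⟩ := p
        rw [mem_sphere_zero_iff_norm] at hη
        rw [mem_Ioi] at ht
        simp only [homeomorphUnitSphereProd_symm_apply_coe]
        have hnorm : ‖t • η‖ = t := by
          rw [norm_smul, hη, mul_one, Real.norm_eq_abs, abs_of_pos ht]
        have hlc : lastCoord 3 (t • η) = t * lastCoord 3 η := by
          rw [lastCoord3, lastCoord3]
          rfl
        rw [f3, hnorm, hlc, mul_div_cancel_left₀ _ ht.ne']
        by_cases h : t ≤ 1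
        · rw [if_pos h, if_pos h, mul_one]
        · rw [if_neg h, if_neg h, mul_zero]
    _ = _ := by
        rw [hdim, MeasureTheory.integral_prod_mul (μ := (volume : Measure E3).toSphere)
          (ν := Measure.volumeIoiPow 2)
          (f := fun η : Sph 3 => G r (lastCoord 3 η.1))
          (g := fun t : Ioi (0:ℝ) => if t.1 ≤ 1 then (1:ℝ) else 0), weight_int]

lemma sqrt_le_one_iff {u : ℝ} (hu : 0 ≤ u) : Real.sqrt u ≤ 1 ↔ u ≤ 1 := by
  constructor
  · intro h
    have := Real.sq_sqrt hu
    nlinarith [Real.sqrt_nonneg u]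
  · intro h
    rw [show (1:ℝ) = Real.sqrt 1 by simp]
    exact Real.sqrt_le_sqrt h

lemma lastCoord_meas : Measurable fun x : E3 => lastCoord 3 x := by
  simp only [lastCoord3]
  exact (measurable_pi_apply _).comp (PiLp.volume_preserving_ofLp (Fin 3)).measurable

lemma f3_meas : Measurable (f3 r) := by
  unfold f3
  apply Measurable.ite (measurableSet_le measurable_norm measurable_const)
  · exact G_meas.comp (lastCoord_meas.div measurable_norm)
  · exact measurable_const

lemma f3_intble (hr0 : 0 ≤ r) (hr1 : r < 1) : Integrable (f3 r) := by
  set M : ℝ := (1+r)^2/(1-r)^2 with hM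
  have hM0 : 0 ≤ M := by
    have : (0:ℝ) < 1 - r := by linarith
    positivity
  apply Integrable.mono' (g := (closedBall (0:E3) 1).indicator (fun _ => M))
  · rw [integrable_indicator_iff measurableSet_closedBall]
    exact integrableOn_const measure_closedBall_lt_top.ne
  · exact f3_meas.aestronglyMeasurable
  · apply Filter.Eventually.of_forall
    intro x
    rw [f3]
    by_cases h : ‖x‖ ≤ 1
    · rw [if_pos h, Set.indicator_of_mem (by simpa [mem_closedBall, dist_zero_right] using h)]
      apply G_bound hr0 hr1
      rcases eq_or_lt_of_le (norm_nonneg x) with h0 | h0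
      · rw [← h0, div_zero, abs_zero]; norm_num
      · rw [abs_div, abs_of_pos h0, div_le_one h0, lastCoord3]
        exact coord_abs_le x _
    · rw [if_neg h, norm_zero]
      exact Set.indicator_apply_nonneg (fun _ => hM0)

lemma inner2 (hr0 : 0 ≤ r) (hr1 : r < 1) (z : ℝ) :
    ∫ y : (Fin 2 → ℝ), (if Real.sqrt (z^2 + ∑ j, (y j)^2) ≤ 1
        then G r (z / Real.sqrt (z^2 + ∑ j, (y j)^2)) else 0)
      = 2 * (π * ∫ ρ in Ioi (0:ℝ), ρ * fz r z ρ) := by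
  set H : (Fin 2 → ℝ) → ℝ := fun y => (if Real.sqrt (z^2 + ∑ j, (y j)^2) ≤ 1
        then G r (z / Real.sqrt (z^2 + ∑ j, (y j)^2)) else 0) with hH
  have h' := (EuclideanSpace.volume_preserving_symm_measurableEquiv_toLp (Fin 2)).integral_comp
    (MeasurableEquiv.toLp 2 (Fin 2 → ℝ)).symm.measurableEmbedding H
  rw [← h']
  have hfun : ∀ x : E2, H ((MeasurableEquiv.toLp 2 (Fin 2 → ℝ)).symm x) = fz r z ‖x‖ := by
    intro x
    have hsum : ∑ j, (((MeasurableEquiv.toLp 2 (Fin 2 → ℝ)).symm x) j)^2 = ‖x‖^2 := by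
      rw [EuclideanSpace.norm_eq, Real.sq_sqrt (by positivity)]
      congr 1
      funext j
      rw [Real.norm_eq_abs, sq_abs]
      rfl
    have hnn : (0:ℝ) ≤ z^2 + ‖x‖^2 := by positivity
    rw [hH]
    simp only [hsum]
    simp only [fz]
    exact if_congr (sqrt_le_one_iff hnn) rfl rfl
  rw [integral_congr_ae (Filter.Eventually.of_forall hfun),
    integral_fun_norm_addHaar (volume : Measure E2) (fz r z)]
  rw [finrank_euclideanSpace, Fintype.card_fin]
  rw [measureReal_def, EuclideanSpace.volume_ball, Fintype.card_fin,
    (show ((2:ℕ):ℝ)/2 + 1 = 2 by norm_num), Real.Gamma_two, Real.sq_sqrt pi_nonneg,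
    ENNReal.ofReal_one, one_pow, one_mul, div_one, ENNReal.toReal_ofReal pi_nonneg]
  rw [nsmul_eq_mul, smul_eq_mul]
  norm_num

def Fbig (r : ℝ) : ℝ × (Fin 2 → ℝ) → ℝ := fun p =>
  if Real.sqrt (p.1^2 + ∑ j, (p.2 j)^2) ≤ 1
    then G r (p.1 / Real.sqrt (p.1^2 + ∑ j, (p.2 j)^2)) else 0

def e3equiv : EuclideanSpace ℝ (Fin 3) ≃ᵐ ℝ × (Fin 2 → ℝ) :=
  (MeasurableEquiv.toLp 2 (Fin 3 → ℝ)).symm.trans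
    (MeasurableEquiv.piFinSuccAbove (fun _ : Fin 3 => ℝ) 2)

lemma e3equiv_mp : MeasurePreserving e3equiv volume volume :=
  (MeasureTheory.volume_preserving_piFinSuccAbove (fun _ : Fin 3 => ℝ) 2).comp
    (EuclideanSpace.volume_preserving_symm_measurableEquiv_toLp (Fin 3))

lemma key_pt (x : EuclideanSpace ℝ (Fin 3)) : Fbig r (e3equiv x) = f3 r x := by
  have h1 : (e3equiv x).1 = x (2 : Fin 3) := rfl
  have h2 : ∀ j, (e3equiv x).2 j = x ((2 : Fin 3).succAbove j) := fun j => rfl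
  have hsum : (e3equiv x).1^2 + ∑ j, ((e3equiv x).2 j)^2 = ∑ i, (x i)^2 := by
    simp only [h1, h2]
    rw [Fin.sum_univ_succAbove (fun i => (x i)^2) 2]
  have hnorm : ‖x‖ = Real.sqrt ((e3equiv x).1^2 + ∑ j, ((e3equiv x).2 j)^2) := by
    rw [hsum, EuclideanSpace.norm_eq]
    congr 1
    apply Finset.sum_congr rfl
    intro i _
    rw [Real.norm_eq_abs, sq_abs]
  have hlast : lastCoord 3 x = (e3equiv x).1 := by
    rw [lastCoord3, h1]
    rfl
  rw [Fbig, f3, ← hnorm, hlast]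

lemma step_fubini (hr0 : 0 ≤ r) (hr1 : r < 1) :
    ∫ x : EuclideanSpace ℝ (Fin 3), f3 r x
      = ∫ z : ℝ, 2 * (π * ∫ ρ in Ioi (0:ℝ), ρ * fz r z ρ) := by
  have hF : Integrable (Fbig r) (volume.prod volume) := by
    rw [← MeasureTheory.Measure.volume_eq_prod,
      ← e3equiv_mp.integrable_comp_emb e3equiv.measurableEmbedding]
    have : (Fbig r) ∘ e3equiv = f3 r := funext (fun x => key_pt x)
    rw [this]
    exact f3_intble hr0 hr1
  calc ∫ x : EuclideanSpace ℝ (Fin 3), f3 r x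
      = ∫ p : ℝ × (Fin 2 → ℝ), Fbig r p ∂volume := by
        rw [← e3equiv_mp.integral_comp e3equiv.measurableEmbedding (Fbig r)]
        exact MeasureTheory.integral_congr_ae
          (Filter.Eventually.of_forall (fun x : EuclideanSpace ℝ (Fin 3) => (key_pt x).symm))
    _ = ∫ z : ℝ, ∫ y : Fin 2 → ℝ, Fbig r (z, y) := by
        rw [MeasureTheory.Measure.volume_eq_prod]
        exact MeasureTheory.integral_prod _ hF
    _ = _ := MeasureTheory.integral_congr_ae
          (Filter.Eventually.of_forall (fun z => inner2 hr0 hr1 z))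


/-- for `n = 3`, `U_h(r e₃) = 2r/(1+r²)`. -/
theorem stmt13 (r : ℝ) (hr0 : 0 ≤ r) (hr1 : r < 1) :
    Uh 3 (r • eLast 3) = 2 * r / (1 + r ^ 2) := by
  have hf : ∫ x : E3, f3 r x = 2*π*((4*r/(1+r^2))/3) := by
    rw [step_fubini hr0 hr1]
    have h1 : ∀ z : ℝ, 2 * (π * ∫ ρ in Ioi (0:ℝ), ρ * fz r z ρ)
        = 2*π * ∫ s in Ioi (0:ℝ), Q r z s := by
      intro z
      rw [(show (∫ ρ in Ioi (0:ℝ), ρ * fz r z ρ)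
          = ∫ ρ in Ioi (0:ℝ), (ρ * (if z^2 + ρ^2 ≤ 1 then G r (z / Real.sqrt (z^2 + ρ^2)) else 0))
          from rfl), inner_subst hr0 hr1 z]
      rw [(show (∫ s in Ioi (0:ℝ), (if |z| < s ∧ s ≤ 1 then s * G r (z/s) else 0))
          = ∫ s in Ioi (0:ℝ), Q r z s from rfl)]
      ring
    rw [MeasureTheory.integral_congr_ae (Filter.Eventually.of_forall h1),
      MeasureTheory.integral_const_mul, swap_eval hr0 hr1]
  have hA : (∫ η : Sph 3, G r (lastCoord 3 η.1) ∂((volume : Measure E3).toSphere))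
      = 2*π*(4*r/(1+r^2)) := by
    have hp := polar3 hr0 hr1
    rw [hf] at hp
    linarith [hp]
  rw [Uh_eq hr0 hr1, hA]
  have hπ : π ≠ 0 := Real.pi_ne_zero
  have h2 : (1:ℝ) + r^2 ≠ 0 := by positivity
  field_simp
end
end

section
/- Let n ≥ 2 and suppose u : B^n → ℝ^n is given by u(x) = ∫_{S^{n-1}} P_h(x, η) φ(η) dσ(η) for some essentially bounded measurable φ : S^{n-1} → ℝ^n with u(0) = 0. Then for every x ∈ B^n with |x| = r, |u(x)| ≤ U_h(r e_n) · ‖φ‖_{L^∞}, where U_h = P_h[χ_{S_+^{n-1}} − χ_{S_-^{n-1}}]. -/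
open MeasureTheory Metric Real Set

noncomputable section

/-! ### Auxiliary material -/

open scoped RealInnerProductSpace Pointwise ENNReal NNReal

section Aux

variable {n : ℕ}

lemma mem_sph_of (A : EuclideanSpace ℝ (Fin n) →ₗᵢ[ℝ] EuclideanSpace ℝ (Fin n))
    (η : Sph n) : A η.1 ∈ Sph n := by
  have := mem_sphere_zero_iff_norm.1 η.2
  rw [mem_sphere_zero_iff_norm, A.norm_map, this]

/-- A linear isometry equivalence of `ℝⁿ` restricts to a measurable equivalence of the
unit sphere. -/
def sphereEquiv (A : EuclideanSpace ℝ (Fin n) ≃ₗᵢ[ℝ] EuclideanSpace ℝ (Fin n)) :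
    Sph n ≃ᵐ Sph n where
  toFun η := ⟨A η.1, mem_sph_of A.toLinearIsometry η⟩
  invFun η := ⟨A.symm η.1, mem_sph_of A.symm.toLinearIsometry η⟩
  left_inv η := by simp
  right_inv η := by simp
  measurable_toFun := ((A.continuous.comp continuous_subtype_val).subtype_mk _).measurable
  measurable_invFun := ((A.symm.continuous.comp continuous_subtype_val).subtype_mk _).measurable

lemma volume_preimage (A : EuclideanSpace ℝ (Fin n) ≃ₗᵢ[ℝ] EuclideanSpace ℝ (Fin n))
    (S : Set (EuclideanSpace ℝ (Fin n))) : volume (A ⁻¹' S) = volume S := by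
  have h1 : (volume : Measure (EuclideanSpace ℝ (Fin n))).map
      A.toHomeomorph.toMeasurableEquiv = volume := A.measurePreserving.map_eq
  calc volume (A ⁻¹' S) = volume (A.toHomeomorph.toMeasurableEquiv ⁻¹' S) := rfl
    _ = (volume.map A.toHomeomorph.toMeasurableEquiv) S :=
        (MeasurableEquiv.map_apply _ _).symm
    _ = volume S := by rw [h1]

lemma toSphere_map (A : EuclideanSpace ℝ (Fin n) ≃ₗᵢ[ℝ] EuclideanSpace ℝ (Fin n)) :
    (volume : Measure (EuclideanSpace ℝ (Fin n))).toSphere.map (sphereEquiv A)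
      = (volume : Measure (EuclideanSpace ℝ (Fin n))).toSphere := by
  refine Measure.ext fun s hs => ?_
  rw [MeasurableEquiv.map_apply]
  rw [Measure.toSphere_apply' _ hs,
    Measure.toSphere_apply' _ ((sphereEquiv A).measurable hs)]
  have himg : (Subtype.val '' (sphereEquiv A ⁻¹' s)) = A ⁻¹' (Subtype.val '' s) := by
    ext y
    constructor
    · rintro ⟨η, hη, rfl⟩
      exact ⟨sphereEquiv A η, hη, rfl⟩
    · rintro ⟨ζ, hζ, hζeq⟩
      have hy : y ∈ Sph n := by
        have h1 : ‖A y‖ = 1 := by rw [← hζeq]; exact mem_sphere_zero_iff_norm.1 ζ.2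
        rw [A.norm_map] at h1
        exact mem_sphere_zero_iff_norm.2 h1
      refine ⟨⟨y, hy⟩, ?_, rfl⟩
      show sphereEquiv A ⟨y, hy⟩ ∈ s
      have : sphereEquiv A ⟨y, hy⟩ = ζ := Subtype.ext hζeq.symm
      rw [this]; exact hζ
  rw [himg]
  have hsmul : Ioo (0:ℝ) 1 • (A ⁻¹' (Subtype.val '' s))
      = A ⁻¹' (Ioo (0:ℝ) 1 • (Subtype.val '' s)) := by
    ext z
    constructor
    · rintro ⟨c, hc, y, hy, rfl⟩
      exact ⟨c, hc, A y, hy, (map_smul A c y).symm⟩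
    · rintro ⟨c, hc, w, hw, hz⟩
      refine ⟨c, hc, A.symm w, ?_, ?_⟩
      · show A (A.symm w) ∈ Subtype.val '' s
        simpa using hw
      · apply A.injective
        show A (c • A.symm w) = A z
        rw [map_smul A, ← hz]
        simp
  rw [hsmul, volume_preimage]

lemma sphereMeasure_measurePreserving
    (A : EuclideanSpace ℝ (Fin n) ≃ₗᵢ[ℝ] EuclideanSpace ℝ (Fin n)) :
    MeasurePreserving (sphereEquiv A) (sphereMeasure n) (sphereMeasure n) := by
  refine ⟨(sphereEquiv A).measurable, ?_⟩
  unfold sphereMeasure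
  rw [Measure.map_smul, toSphere_map]

lemma integral_sphereEquiv (A : EuclideanSpace ℝ (Fin n) ≃ₗᵢ[ℝ] EuclideanSpace ℝ (Fin n))
    (g : Sph n → ℝ) :
    ∫ η, g (sphereEquiv A η) ∂sphereMeasure n = ∫ η, g η ∂sphereMeasure n :=
  (sphereMeasure_measurePreserving A).integral_comp
    (sphereEquiv A).measurableEmbedding g

lemma sphereMeasure_isProbability (hn : 0 < n) :
    IsProbabilityMeasure (sphereMeasure n) := by
  constructor
  unfold sphereMeasure
  rw [Measure.smul_apply, smul_eq_mul]
  have hdim : Module.finrank ℝ (EuclideanSpace ℝ (Fin n)) = n := by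
    simp [finrank_euclideanSpace]
  have htop : (volume : Measure (EuclideanSpace ℝ (Fin n))).toSphere Set.univ ≠ ⊤ :=
    (measure_lt_top _ _).ne
  have h0 : (volume : Measure (EuclideanSpace ℝ (Fin n))).toSphere Set.univ ≠ 0 := by
    rw [Measure.toSphere_apply_univ, hdim]
    exact mul_ne_zero (by exact_mod_cast hn.ne') (measure_ball_pos _ _ one_pos).ne'
  exact ENNReal.inv_mul_cancel h0 htop

lemma integrable_of_bdd [IsFiniteMeasure (sphereMeasure n)] {f : Sph n → ℝ} (hf : Measurable f)
    {C : ℝ} (h : ∀ η, |f η| ≤ C) : Integrable f (sphereMeasure n) :=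
  ⟨hf.aestronglyMeasurable, HasFiniteIntegral.of_bounded (C := C) (ae_of_all _ h)⟩

lemma norm_eLast (hn : 0 < n) : ‖eLast n‖ = 1 := by
  rw [eLast, dif_pos hn, EuclideanSpace.norm_single]
  simp

lemma inner_eLast (hn : 0 < n) (η : EuclideanSpace ℝ (Fin n)) :
    ⟪eLast n, η⟫ = lastCoord n η := by
  rw [eLast, dif_pos hn, lastCoord, dif_pos hn, EuclideanSpace.inner_single_left]
  simp

lemma lastCoord_measurable (hn : 0 < n) :
    Measurable (fun η : Sph n => lastCoord n η.1) := by
  have : (fun η : Sph n => lastCoord n η.1)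
      = fun η : Sph n => η.1 (⟨n - 1, by omega⟩ : Fin n) := by
    funext η; rw [lastCoord, dif_pos hn]
  rw [this]
  exact (measurable_pi_apply _).comp ((WithLp.measurable_ofLp 2 _).comp measurable_subtype_coe)

lemma hemiDiff_measurable (hn : 0 < n) :
    Measurable (fun η : Sph n => hemiDiff n η.1) := by
  unfold hemiDiff
  exact Measurable.sub
    (Measurable.ite (measurableSet_le measurable_const (lastCoord_measurable hn))
      measurable_const measurable_const)
    (Measurable.ite (measurableSet_le (lastCoord_measurable hn) measurable_const)
      measurable_const measurable_const)

lemma hemiDiff_abs_le (η : EuclideanSpace ℝ (Fin n)) : |hemiDiff n η| ≤ 1 := by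
  unfold hemiDiff
  split_ifs <;> norm_num

lemma Ph_measurable (x : EuclideanSpace ℝ (Fin n)) :
    Measurable (fun η : Sph n => Ph n x η.1) := by
  unfold Ph
  apply Measurable.pow_const
  exact Measurable.div measurable_const
    (((continuous_const.sub continuous_subtype_val).norm.pow 2).measurable)

lemma norm_sub_pos_of_mem (x : EuclideanSpace ℝ (Fin n)) (hx : ‖x‖ < 1)
    {η : EuclideanSpace ℝ (Fin n)} (hη : ‖η‖ = 1) : 1 - ‖x‖ ≤ ‖x - η‖ := by
  have := norm_sub_norm_le η x
  rw [hη] at this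
  calc 1 - ‖x‖ ≤ ‖η - x‖ := by linarith
    _ = ‖x - η‖ := norm_sub_rev _ _

lemma Ph_nonneg (x : EuclideanSpace ℝ (Fin n)) (hx : ‖x‖ < 1)
    {η : EuclideanSpace ℝ (Fin n)} (hη : ‖η‖ = 1) : 0 ≤ Ph n x η := by
  unfold Ph
  apply pow_nonneg
  apply div_nonneg
  · nlinarith [norm_nonneg x]
  · positivity

lemma Ph_le (x : EuclideanSpace ℝ (Fin n)) (hx : ‖x‖ < 1)
    {η : EuclideanSpace ℝ (Fin n)} (hη : ‖η‖ = 1) :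
    Ph n x η ≤ ((1 - ‖x‖ ^ 2) / (1 - ‖x‖) ^ 2) ^ (n - 1) := by
  unfold Ph
  have h1 : (0:ℝ) < 1 - ‖x‖ := by linarith
  have h2 : 1 - ‖x‖ ≤ ‖x - η‖ := norm_sub_pos_of_mem x hx hη
  apply pow_le_pow_left₀
  · apply div_nonneg
    · nlinarith [norm_nonneg x]
    · positivity
  · apply div_le_div_of_nonneg_left
    · nlinarith [norm_nonneg x]
    · positivity
    · nlinarith

lemma Ph_isometry (A : EuclideanSpace ℝ (Fin n) ≃ₗᵢ[ℝ] EuclideanSpace ℝ (Fin n))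
    (y z : EuclideanSpace ℝ (Fin n)) : Ph n (A y) (A z) = Ph n y z := by
  unfold Ph
  rw [A.norm_map, ← map_sub A, A.norm_map]

end Aux

section Aux2

variable {n : ℕ}

/-- The constant `c = ((1-r²)/(1+r²))^{n-1}`, the value of the kernel on the equator. -/
def cst (n : ℕ) (r : ℝ) : ℝ := ((1 - r ^ 2) / (1 + r ^ 2)) ^ (n - 1)

lemma norm_smul_eLast (hn : 0 < n) (r : ℝ) (hr0 : 0 ≤ r) : ‖r • eLast n‖ = r := by
  rw [norm_smul, norm_eLast hn, Real.norm_eq_abs, abs_of_nonneg hr0, mul_one]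

lemma norm_sub_sq_eLast (hn : 0 < n) (r : ℝ) {η : EuclideanSpace ℝ (Fin n)} (hη : ‖η‖ = 1) :
    ‖r • eLast n - η‖ ^ 2 = 1 + r ^ 2 - 2 * r * lastCoord n η := by
  rw [norm_sub_sq_real, real_inner_smul_left, inner_eLast hn, norm_smul, norm_eLast hn, hη,
    mul_one, Real.norm_eq_abs, sq_abs]
  ring

lemma Ph_smul_eLast (hn : 0 < n) (r : ℝ) (hr0 : 0 ≤ r) {η : EuclideanSpace ℝ (Fin n)}
    (hη : ‖η‖ = 1) :
    Ph n (r • eLast n) η = ((1 - r ^ 2) / (1 + r ^ 2 - 2 * r * lastCoord n η)) ^ (n - 1) := by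
  unfold Ph
  rw [norm_smul_eLast hn r hr0, norm_sub_sq_eLast hn r hη]

lemma key_pointwise (hn : 0 < n) {r : ℝ} (hr0 : 0 ≤ r) (hr1 : r < 1)
    {η : EuclideanSpace ℝ (Fin n)} (hη : ‖η‖ = 1) :
    Ph n (r • eLast n) η * hemiDiff n η
      = |Ph n (r • eLast n) η - cst n r| + cst n r * hemiDiff n η := by
  have hx : ‖r • eLast n‖ < 1 := by rw [norm_smul_eLast hn r hr0]; exact hr1
  have hnum : (0:ℝ) ≤ 1 - r ^ 2 := by nlinarith
  have hD : 0 < 1 + r ^ 2 - 2 * r * lastCoord n η := by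
    have h2 := norm_sub_pos_of_mem (r • eLast n) hx hη
    rw [norm_smul_eLast hn r hr0] at h2
    have h4 := norm_sub_sq_eLast hn r hη
    nlinarith [norm_nonneg (r • eLast n - η)]
  have hPh := Ph_smul_eLast hn r hr0 hη
  set t := lastCoord n η with htdef
  rcases lt_trichotomy t 0 with h | h | h
  · have hle : Ph n (r • eLast n) η ≤ cst n r := by
      rw [hPh]; unfold cst
      gcongr <;> nlinarith
    have hhemi : hemiDiff n η = -1 := by
      unfold hemiDiff
      rw [← htdef, if_neg (not_le.2 h), if_pos h.le]
      ring
    rw [hhemi, abs_of_nonpos (by linarith)]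
    ring
  · have heq : Ph n (r • eLast n) η = cst n r := by
      rw [hPh, h]; unfold cst; norm_num
    have hhemi : hemiDiff n η = 0 := by
      unfold hemiDiff
      rw [← htdef, if_pos h.ge, if_pos h.le]
      ring
    rw [heq, hhemi]
    simp
  · have hge : cst n r ≤ Ph n (r • eLast n) η := by
      rw [hPh]; unfold cst
      gcongr <;> nlinarith
    have hhemi : hemiDiff n η = 1 := by
      unfold hemiDiff
      rw [← htdef, if_pos h.le, if_neg (not_le.2 h)]
      ring
    rw [hhemi, abs_of_nonneg (by linarith)]
    ring

lemma integral_hemiDiff (hn : 0 < n) :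
    ∫ η : Sph n, hemiDiff n η.1 ∂sphereMeasure n = 0 := by
  set R := Submodule.reflection (ℝ ∙ (eLast n))ᗮ with hRdef
  have hRe : R (eLast n) = -(eLast n) :=
    Submodule.reflection_orthogonalComplement_singleton_eq_neg _
  have hlast : ∀ η, lastCoord n (R η) = - lastCoord n η := by
    intro η
    rw [← inner_eLast hn, ← inner_eLast hn]
    have h1 : ⟪R (eLast n), R η⟫ = ⟪eLast n, η⟫ := R.inner_map_map _ _
    rw [hRe, inner_neg_left] at h1
    linarith
  have hflip : ∀ η : Sph n,
      hemiDiff n ((sphereEquiv R η : Sph n) : EuclideanSpace ℝ (Fin n)) = - hemiDiff n η.1 := by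
    intro η
    show hemiDiff n (R η.1) = - hemiDiff n η.1
    unfold hemiDiff
    rw [hlast]
    simp only [neg_nonneg, Left.nonneg_neg_iff, neg_nonpos]
    split_ifs <;> ring
  have h2 := integral_sphereEquiv R (fun η : Sph n => hemiDiff n η.1)
  simp only [hflip] at h2
  rw [integral_neg] at h2
  linarith

lemma Ph_integrable (hn : 0 < n) (x : EuclideanSpace ℝ (Fin n)) (hx : ‖x‖ < 1) :
    Integrable (fun η : Sph n => Ph n x η.1) (sphereMeasure n) := by
  haveI := sphereMeasure_isProbability hn
  refine integrable_of_bdd (Ph_measurable x) (C := ((1 - ‖x‖ ^ 2) / (1 - ‖x‖) ^ 2) ^ (n - 1))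
    fun η => ?_
  rw [abs_of_nonneg (Ph_nonneg x hx (mem_sphere_zero_iff_norm.1 η.2))]
  exact Ph_le x hx (mem_sphere_zero_iff_norm.1 η.2)

lemma Uh_eq_s16 (hn : 0 < n) {r : ℝ} (hr0 : 0 ≤ r) (hr1 : r < 1) :
    Uh n (r • eLast n)
      = ∫ η : Sph n, |Ph n (r • eLast n) η.1 - cst n r| ∂sphereMeasure n := by
  haveI := sphereMeasure_isProbability hn
  have hx : ‖r • eLast n‖ < 1 := by rw [norm_smul_eLast hn r hr0]; exact hr1
  have hint1 : Integrable (fun η : Sph n => |Ph n (r • eLast n) η.1 - cst n r|)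
      (sphereMeasure n) := ((Ph_integrable hn _ hx).sub (integrable_const _)).abs
  have hint2 : Integrable (fun η : Sph n => hemiDiff n η.1) (sphereMeasure n) :=
    integrable_of_bdd (hemiDiff_measurable hn) fun η => hemiDiff_abs_le η.1
  unfold Uh
  calc ∫ η : Sph n, Ph n (r • eLast n) η.1 * hemiDiff n η.1 ∂sphereMeasure n
      = ∫ η : Sph n, (|Ph n (r • eLast n) η.1 - cst n r|
          + cst n r * hemiDiff n η.1) ∂sphereMeasure n := by
        refine integral_congr_ae (ae_of_all _ fun η => ?_)
        exact key_pointwise hn hr0 hr1 (mem_sphere_zero_iff_norm.1 η.2)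
    _ = (∫ η : Sph n, |Ph n (r • eLast n) η.1 - cst n r| ∂sphereMeasure n)
          + cst n r * ∫ η : Sph n, hemiDiff n η.1 ∂sphereMeasure n := by
        rw [integral_add hint1 (hint2.const_mul _), integral_const_mul]
    _ = ∫ η : Sph n, |Ph n (r • eLast n) η.1 - cst n r| ∂sphereMeasure n := by
        rw [integral_hemiDiff hn, mul_zero, add_zero]

end Aux2

/-- Schwarz-type lemma for `p = ∞`: if `u = P_h[φ]` with `φ` essentially
bounded and `u(0) = 0`, then `|u(x)| ≤ U_h(|x| e_n) ‖φ‖_{L^∞}`. -/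
theorem stmt16 (n : ℕ) (hn : 2 ≤ n) (φ : Sph n → EuclideanSpace ℝ (Fin n))
    (hmeas : Measurable φ) (hbdd : eLpNorm φ ⊤ (sphereMeasure n) < ⊤)
    (u : EuclideanSpace ℝ (Fin n) → EuclideanSpace ℝ (Fin n))
    (hu : ∀ x ∈ Metric.ball (0 : EuclideanSpace ℝ (Fin n)) 1,
      u x = ∫ η : Sph n, Ph n x η.1 • φ η ∂ sphereMeasure n)
    (hu0 : u 0 = 0)
    (x : EuclideanSpace ℝ (Fin n)) (hx : x ∈ Metric.ball (0 : EuclideanSpace ℝ (Fin n)) 1) :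
    ‖u x‖ ≤ Uh n (‖x‖ • eLast n) * (eLpNorm φ ⊤ (sphereMeasure n)).toReal := by
  have hn0 : 0 < n := by omega
  haveI := sphereMeasure_isProbability hn0
  set M := (eLpNorm φ ⊤ (sphereMeasure n)).toReal with hMdef
  have hM0 : 0 ≤ M := ENNReal.toReal_nonneg
  have hφmem : MemLp φ ⊤ (sphereMeasure n) := ⟨hmeas.aestronglyMeasurable, hbdd⟩
  have hφint : Integrable φ (sphereMeasure n) := hφmem.integrable le_top
  have hφae : ∀ᵐ η ∂sphereMeasure n, ‖φ η‖ ≤ M := by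
    filter_upwards [ae_le_eLpNormEssSup (f := φ) (μ := sphereMeasure n)] with η hη
    have h1 : (‖φ η‖₊ : ℝ≥0∞) ≤ eLpNorm φ ⊤ (sphereMeasure n) := by
      rw [eLpNorm_exponent_top]; exact_mod_cast hη
    calc ‖φ η‖ = ((‖φ η‖₊ : ℝ≥0∞)).toReal := by simp
      _ ≤ M := ENNReal.toReal_mono hbdd.ne h1
  have hmean : ∫ η : Sph n, φ η ∂sphereMeasure n = 0 := by
    have h0 := hu 0 (mem_ball_self one_pos)
    rw [hu0] at h0
    have hP0 : ∀ η : Sph n, Ph n 0 η.1 = 1 := by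
      intro η
      unfold Ph
      have hη := mem_sphere_zero_iff_norm.1 η.2
      rw [norm_zero, zero_sub, norm_neg, hη]
      norm_num
    simp_rw [hP0, one_smul] at h0
    exact h0.symm
  have hr1 : ‖x‖ < 1 := by simpa [mem_ball, dist_zero_right] using hx
  have hr0 : (0:ℝ) ≤ ‖x‖ := norm_nonneg x
  set c := cst n ‖x‖ with hcdef
  -- the rotation
  have hnorm : ‖‖x‖ • eLast n‖ = ‖x‖ := norm_smul_eLast hn0 _ hr0
  set A := Submodule.reflection (ℝ ∙ (‖x‖ • eLast n - x))ᗮ with hAdef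
  have hAx : A (‖x‖ • eLast n) = x := Submodule.reflection_sub hnorm
  have hrot : ∫ η : Sph n, |Ph n x η.1 - c| ∂sphereMeasure n = Uh n (‖x‖ • eLast n) := by
    rw [Uh_eq_s16 hn0 hr0 hr1]
    rw [← integral_sphereEquiv A (fun η : Sph n => |Ph n x η.1 - c|)]
    refine integral_congr_ae (ae_of_all _ fun η => ?_)
    show |Ph n x (A η.1) - c| = |Ph n (‖x‖ • eLast n) η.1 - c|
    have h3 := Ph_isometry A (‖x‖ • eLast n) η.1
    rw [hAx] at h3
    rw [h3]
  have hUnonneg : 0 ≤ Uh n (‖x‖ • eLast n) := by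
    rw [Uh_eq_s16 hn0 hr0 hr1]
    exact integral_nonneg fun η => abs_nonneg _
  rcases eq_or_ne (u x) 0 with h0 | h0
  · rw [h0, norm_zero]
    exact mul_nonneg hUnonneg hM0
  set e := ‖u x‖⁻¹ • u x with hedef
  have hne : ‖e‖ = 1 := norm_smul_inv_norm h0
  have hfint : Integrable (fun η : Sph n => Ph n x η.1) (sphereMeasure n) :=
    Ph_integrable hn0 x hr1
  have hPhbd : ∀ η : Sph n, |Ph n x η.1| ≤ ((1 - ‖x‖ ^ 2) / (1 - ‖x‖) ^ 2) ^ (n - 1) := by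
    intro η
    rw [abs_of_nonneg (Ph_nonneg x hr1 (mem_sphere_zero_iff_norm.1 η.2))]
    exact Ph_le x hr1 (mem_sphere_zero_iff_norm.1 η.2)
  have hPhmem : MemLp (fun η : Sph n => Ph n x η.1) ⊤ (sphereMeasure n) :=
    memLp_top_of_bound (Ph_measurable x).aestronglyMeasurable _
      (ae_of_all _ fun η => by rw [Real.norm_eq_abs]; exact hPhbd η)
  have hFint : Integrable (fun η : Sph n => Ph n x η.1 • φ η) (sphereMeasure n) :=
    hφint.smul_of_top_right hPhmem
  have hg : Integrable (fun η : Sph n => ⟪e, φ η⟫) (sphereMeasure n) :=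
    hφint.const_inner e
  have hgbd : ∀ᵐ η ∂sphereMeasure n, |⟪e, φ η⟫| ≤ M := by
    filter_upwards [hφae] with η hη
    calc |⟪e, φ η⟫| ≤ ‖e‖ * ‖φ η‖ := abs_real_inner_le_norm _ _
      _ = ‖φ η‖ := by rw [hne, one_mul]
      _ ≤ M := hη
  have hmean' : ∫ η : Sph n, ⟪e, φ η⟫ ∂sphereMeasure n = 0 := by
    rw [integral_inner hφint, hmean, inner_zero_right]
  have hux : ‖u x‖ = ∫ η : Sph n, Ph n x η.1 * ⟪e, φ η⟫ ∂sphereMeasure n := by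
    have h1 : ⟪e, u x⟫ = ∫ η : Sph n, ⟪e, Ph n x η.1 • φ η⟫ ∂sphereMeasure n := by
      rw [hu x hx, integral_inner hFint]
    have h2 : ⟪e, u x⟫ = ‖u x‖ := by
      rw [hedef, real_inner_smul_left, real_inner_self_eq_norm_sq, sq,
        inv_mul_cancel_left₀ (norm_ne_zero_iff.2 h0)]
    rw [← h2, h1]
    refine integral_congr_ae (ae_of_all _ fun η => ?_)
    exact real_inner_smul_right e (φ η) (Ph n x η.1)
  have hint_sub_mul : Integrable
      (fun η : Sph n => (Ph n x η.1 - c) * ⟪e, φ η⟫) (sphereMeasure n) := by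
    refine Integrable.bdd_mul hg
      ((Ph_measurable x).sub measurable_const).aestronglyMeasurable
      (c := ((1 - ‖x‖ ^ 2) / (1 - ‖x‖) ^ 2) ^ (n - 1) + |c|) (ae_of_all _ fun η => ?_)
    rw [Real.norm_eq_abs]
    calc |Ph n x η.1 - c| ≤ |Ph n x η.1| + |c| := abs_sub _ _
      _ ≤ _ := by linarith [hPhbd η]
  have habs_int : Integrable (fun η : Sph n => |Ph n x η.1 - c| * M) (sphereMeasure n) :=
    ((hfint.sub (integrable_const c)).abs).mul_const M
  have hsplit : ∫ η : Sph n, Ph n x η.1 * ⟪e, φ η⟫ ∂sphereMeasure n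
      = ∫ η : Sph n, (Ph n x η.1 - c) * ⟪e, φ η⟫ ∂sphereMeasure n := by
    have heq : (fun η : Sph n => Ph n x η.1 * ⟪e, φ η⟫)
        = fun η : Sph n => (Ph n x η.1 - c) * ⟪e, φ η⟫ + c * ⟪e, φ η⟫ := by
      funext η; ring
    rw [heq, integral_add hint_sub_mul (hg.const_mul c), integral_const_mul, hmean',
      mul_zero, add_zero]
  have hmono : ∫ η : Sph n, (Ph n x η.1 - c) * ⟪e, φ η⟫ ∂sphereMeasure n
      ≤ ∫ η : Sph n, |Ph n x η.1 - c| * M ∂sphereMeasure n := by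
    refine integral_mono_ae hint_sub_mul habs_int ?_
    filter_upwards [hgbd] with η hη
    calc (Ph n x η.1 - c) * ⟪e, φ η⟫ ≤ |(Ph n x η.1 - c) * ⟪e, φ η⟫| := le_abs_self _
      _ = |Ph n x η.1 - c| * |⟪e, φ η⟫| := abs_mul _ _
      _ ≤ |Ph n x η.1 - c| * M := by
          exact mul_le_mul_of_nonneg_left hη (abs_nonneg _)
  calc ‖u x‖ = ∫ η : Sph n, (Ph n x η.1 - c) * ⟪e, φ η⟫ ∂sphereMeasure n := by
        rw [hux, hsplit]
    _ ≤ ∫ η : Sph n, |Ph n x η.1 - c| * M ∂sphereMeasure n := hmono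
    _ = (∫ η : Sph n, |Ph n x η.1 - c| ∂sphereMeasure n) * M := by
        rw [integral_mul_const]
    _ = Uh n (‖x‖ • eLast n) * M := by rw [hrot]
end
end
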